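/- In G₁₁ set v = s·u·s and w = z³·s, and let G₈ be the subgroup generated by u and v. Then w = u·v·u = v·u·v, s⁻¹·w·s = w, s⁻¹·v·s = u, w² = u·v·u·v·u·v = v·u·v·u·v·u = z⁶, the center of G₈ equals the cyclic subgroup generated by w² = z⁶ (which has order 4), and Z(G₈) = G₈ ∩ Z(G₁₁); moreover, with Z₈ = {1, z⁶, z¹², z¹⁸}, U = {1, u, u², u³}, and X₈ = {1, v, v², w, w·u, w·u²}, the map Z₈ × U × X₈ → G₈ sending (y, v', x) to y·v'·x is a bijection onto G₈. -/

import Mathlib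

open Pointwise

namespace Octa

def rels : Set (FreeGroup (Fin 3)) :=
  { FreeGroup.of 0 ^ 2, FreeGroup.of 1 ^ 3, FreeGroup.of 2 ^ 4,
    FreeGroup.of 0 * FreeGroup.of 1 * FreeGroup.of 2 *
      (FreeGroup.of 1 * FreeGroup.of 2 * FreeGroup.of 0)⁻¹,
    FreeGroup.of 0 * FreeGroup.of 1 * FreeGroup.of 2 *
      (FreeGroup.of 2 * FreeGroup.of 0 * FreeGroup.of 1)⁻¹ }

/-- The group `G₁₁ = ⟨s, t, u | s² = t³ = u⁴ = 1, stu = tus = ust⟩`. -/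
abbrev G11 := PresentedGroup rels

def s : G11 := PresentedGroup.of 0
def t : G11 := PresentedGroup.of 1
def u : G11 := PresentedGroup.of 2
def z : G11 := s * t * u

def v : G11 := s * u * s
def w : G11 := z ^ 3 * s
def G8 : Subgroup G11 := Subgroup.closure {u, v}


lemma relator_one {r : FreeGroup (Fin 3)} (h : r ∈ rels) : PresentedGroup.mk rels r = 1 :=
  (QuotientGroup.eq_one_iff _).mpr (Subgroup.subset_normalClosure h)

lemma mk_of (i : Fin 3) : PresentedGroup.mk rels (FreeGroup.of i) = PresentedGroup.of i := rfl

lemma hss : s * s = 1 := by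
  have h := relator_one (show FreeGroup.of 0 ^ 2 ∈ rels by simp [rels])
  rw [map_pow, mk_of, sq] at h
  exact h

lemma ht3 : t * (t * t) = 1 := by
  have h := relator_one (show FreeGroup.of 1 ^ 3 ∈ rels by simp [rels])
  rw [map_pow, mk_of, pow_succ, pow_two, mul_assoc] at h
  exact h

lemma hu4 : u * (u * (u * u)) = 1 := by
  have h := relator_one (show FreeGroup.of 2 ^ 4 ∈ rels by simp [rels])
  rw [map_pow, mk_of, pow_succ, pow_succ, pow_two] at h
  rw [show u*(u*(u*u)) = u*u*u*u by group]
  exact h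

lemma hr1 : s * t * u = t * u * s := by
  have h := relator_one (show (FreeGroup.of 0 * FreeGroup.of 1 * FreeGroup.of 2 *
      (FreeGroup.of 1 * FreeGroup.of 2 * FreeGroup.of 0)⁻¹) ∈ rels by simp [rels])
  simp only [map_mul, map_inv, mk_of] at h
  rw [mul_inv_eq_one] at h
  exact h

lemma hr2 : s * t * u = u * s * t := by
  have h := relator_one (show (FreeGroup.of 0 * FreeGroup.of 1 * FreeGroup.of 2 *
      (FreeGroup.of 2 * FreeGroup.of 0 * FreeGroup.of 1)⁻¹) ∈ rels by simp [rels])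
  simp only [map_mul, map_inv, mk_of] at h
  rw [mul_inv_eq_one] at h
  exact h

lemma hz_tus : z = t * u * s := hr1
lemma hz_ust : z = u * s * t := hr2

lemma zcomm_s : s * z = z * s := by
  conv_rhs => rw [hz_tus]
  rw [show z = s*t*u from rfl]
  rw [← mul_assoc, ← mul_assoc, hss, one_mul, mul_assoc (t*u) s s, hss, mul_one]

lemma zcomm_t : t * z = z * t := by
  conv_lhs => rw [hz_ust]
  conv_rhs => rw [hz_tus]
  group

lemma zcomm_u : u * z = z * u := by
  conv_lhs => rw [show z = s*t*u from rfl]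
  conv_rhs => rw [hz_ust]
  group

lemma z_mem_center : z ∈ Subgroup.center G11 := by
  rw [Subgroup.mem_center_iff]
  have htop : ∀ g ∈ Subgroup.closure (Set.range (PresentedGroup.of : Fin 3 → G11)),
      g * z = z * g := by
    intro g hg
    induction hg using Subgroup.closure_induction with
    | mem x hx =>
        obtain ⟨i, rfl⟩ := hx
        fin_cases i
        · exact zcomm_s.symm ▸ zcomm_s
        · exact zcomm_t
        · exact zcomm_u
    | one => rw [one_mul, mul_one]
    | mul x y _ _ hx hy => rw [mul_assoc, hy, ← mul_assoc, hx, mul_assoc]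
    | inv x _ hx =>
        have hc : Commute x z := hx
        exact hc.inv_left
  intro g
  exact htop g (by rw [PresentedGroup.closure_range_of]; trivial)

lemma zc (g : G11) : Commute z g := ((Subgroup.mem_center_iff.mp z_mem_center) g).symm

-- chunk 3: word identities
lemma hsinv : s⁻¹ = s := inv_eq_of_mul_eq_one_left hss
lemma p2 (g : G11) : g^2 = g*g := pow_two g
lemma p3 (g : G11) : g^3 = g*(g*g) := by rw [pow_succ, pow_two]; simp only [mul_assoc]
lemma p4 (g : G11) : g^4 = g*(g*(g*g)) := by
  rw [pow_succ, pow_succ, pow_two]; simp only [mul_assoc]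
lemma hu4' : u^4 = 1 := by rw [p4]; exact hu4
lemma hsred (g : G11) : s*(s*g) = g := by rw [← mul_assoc, hss, one_mul]
lemma hured (g : G11) : u*(u*(u*(u*g))) = g := by
  rw [← mul_assoc, ← mul_assoc, ← mul_assoc, show u*u*u*u = u*(u*(u*u)) by
    simp only [mul_assoc], hu4, one_mul]
lemma zpull_s (g : G11) : s*(z*g) = z*(s*g) := by
  rw [← mul_assoc, zcomm_s, mul_assoc]
lemma zpull_u (g : G11) : u*(z*g) = z*(u*g) := by
  rw [← mul_assoc, zcomm_u, mul_assoc]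
lemma z6c (g : G11) : Commute (z^6) g := ((zc g).pow_left 6)
lemma hz3s : s*z^3 = z^3*s := ((zc s).pow_left 3).eq.symm
lemma z6pull_u (g : G11) : u*(z^6*g) = z^6*(u*g) := by
  rw [← mul_assoc, ← (z6c u).eq, mul_assoc]
lemma z6pull_v (g : G11) : v*(z^6*g) = z^6*(v*g) := by
  rw [← mul_assoc, ← (z6c v).eq, mul_assoc]

lemma ht_expr : t = s * (z * (u*(u*u))) := by
  have h : s * (z * (u*(u*u))) = (s*s) * (t * (u*(u*(u*u)))) := by
    rw [show z = s*t*u from rfl]; simp only [mul_assoc]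
  rw [h, hss, hu4, one_mul, mul_one]

lemma hw_word : w = u*(s*(u*(s*u))) := by
  have h1 : (s*(z*(u*(u*u)))) * ((s*(z*(u*(u*u)))) * (s*(z*(u*(u*u))))) = 1 := by
    rw [← ht_expr]; exact ht3
  simp only [mul_assoc, zpull_s, zpull_u] at h1
  have h2 : (z*(z*z)) * (s*(u*(u*(u*(s*(u*(u*(u*(s*(u*(u*u))))))))))) = 1 := by
    rw [← h1]; simp only [mul_assoc]
  have h3 : ((u*(s*(u*(s*u))))*s) * (s*(u*(u*(u*(s*(u*(u*(u*(s*(u*(u*u))))))))))) = 1 := by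
    simp only [mul_assoc, hsred, hured, hss, hu4, one_mul, mul_one]
  have h4 : z*(z*z) = (u*(s*(u*(s*u))))*s :=
    (eq_inv_of_mul_eq_one_left h2).trans (eq_inv_of_mul_eq_one_left h3).symm
  have h5 : w = (((u*(s*(u*(s*u))))*s)*s) := by
    rw [show w = z^3*s from rfl, show z^3 = z*(z*z) by
      rw [pow_succ, pow_two]; simp only [mul_assoc], h4]
  rw [h5, mul_assoc, hss, mul_one]

lemma hw_uvu : w = u*v*u := by
  rw [hw_word, show v = s*u*s from rfl]; simp only [mul_assoc]

lemma hw_sws : s*(w*s) = w := by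
  rw [show w = z^3*s from rfl, mul_assoc, hss, mul_one]
  exact hz3s

lemma hw_vuv : w = v*u*v := by
  rw [show v = s*u*s from rfl, ← hw_sws, hw_word]; simp only [mul_assoc]

lemma hww : w*w = z^6 := by
  rw [show w = z^3*s from rfl, show (z^3*s)*(z^3*s) = z^3*(s*z^3)*s by
    simp only [mul_assoc], hz3s, show z^3*(z^3*s)*s = (z^3*z^3)*(s*s) by
    simp only [mul_assoc], hss, mul_one, ← pow_add]

lemma hwv : w*v = u*w := by
  rw [show w = z^3*s from rfl, show v = s*u*s from rfl,
    show (z^3*s)*(s*u*s) = z^3*((s*(s*(u*s)))) by simp only [mul_assoc], hsred,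
    show u*(z^3*s) = (u*z^3)*s by simp only [mul_assoc], ← ((zc u).pow_left 3).eq, mul_assoc]

lemma hv4 : v*(v*(v*v)) = 1 := by
  rw [show v = s*u*s from rfl]
  simp only [mul_assoc, hsred, hured]
  exact hss
lemma hv4' : v^4 = 1 := by rw [p4]; exact hv4
lemma hvred (g : G11) : v*(v*(v*(v*g))) = g := by
  rw [← mul_assoc, ← mul_assoc, ← mul_assoc, show v*v*v*v = v*(v*(v*v)) by
    simp only [mul_assoc], hv4, one_mul]
-- chunk 4: key relations hD hE, g-forms, z^24 = 1
lemma ext_right {a b : G11} (h : a = b) (g : G11) : a*g = b*g := by rw [h]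

lemma hbraid : u*v*u = v*u*v := hw_uvu.symm.trans hw_vuv

lemma RBg (g : G11) : u*(v*(u*g)) = v*(u*(v*g)) := by
  have h := ext_right hbraid g; simp only [mul_assoc] at h; exact h

lemma hB : v*(u*(u*(v*(u*u)))) = z^6 := by
  have h1 : u*(u*(u*(w*(w*u)))) = u*(u*(u*(u*(v*(u*(u*(v*(u*u)))))))) := by
    rw [hw_uvu]; simp only [mul_assoc]
  rw [hured, show w*(w*u) = z^6*u by rw [← mul_assoc, hww]] at h1
  simp only [z6pull_u] at h1
  rw [hu4, mul_one] at h1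
  exact h1.symm

lemma hC : u*(v*(v*(u*(v*v)))) = z^6 := by
  have h1 : v*(u*(v*(v*(u*(v*v))))) = w*(w*v) := by
    rw [hw_vuv]; simp only [mul_assoc]
  rw [show w*(w*v) = z^6*v by rw [← mul_assoc, hww], (z6c v).eq] at h1
  exact mul_left_cancel h1

lemma hD : v*(u*(u*v)) = z^6*(u*u) := by
  have h1 : (v*(u*(u*(v*(u*u)))))*(u*u) = (v*(u*(u*v)))*(u*(u*(u*u))) := by
    simp only [mul_assoc]
  rw [hB, mul_assoc, hu4, mul_one] at h1
  exact h1.symm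

lemma hE : u*(v*(v*u)) = z^6*(v*v) := by
  have h1 : (u*(v*(v*(u*(v*v)))))*(v*v) = (u*(v*(v*u)))*(v*(v*(v*v))) := by
    simp only [mul_assoc]
  rw [hC, mul_assoc, hv4, mul_one] at h1
  exact h1.symm

lemma hDg (g : G11) : v*(u*(u*(v*g))) = z^6*(u*(u*g)) := by
  have h := ext_right hD g; simp only [mul_assoc] at h; exact h

lemma hEg (g : G11) : u*(v*(v*(u*g))) = z^6*(v*(v*g)) := by
  have h := ext_right hE g; simp only [mul_assoc] at h; exact h
lemma hz24core : (z^6*(u*(u*1))) = (z^6*(z^6*(z^6*(z^6*(z^6*(u*(u*1))))))) := by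
  have e0 : (z^6*(u*(u*1))) = (z^6*(u*(u*(v*(v*(v*(v*1))))))) := congrArg (fun y => (z^6*(u*(u*y)))) (hvred 1).symm
  have e1 : (z^6*(u*(u*(v*(v*(v*(v*1))))))) = (z^6*(u*(u*(v*(v*(u*(u*(u*(u*(v*(v*1))))))))))) := congrArg (fun y => (z^6*(u*(u*(v*(v*y)))))) (hured (v*(v*1))).symm
  have e2 : (z^6*(u*(u*(v*(v*(u*(u*(u*(u*(v*(v*1))))))))))) = (z^6*(u*(z^6*(v*(v*(u*(u*(u*(v*(v*1)))))))))) := congrArg (fun y => (z^6*(u*y))) (hEg (u*(u*(u*(v*(v*1))))))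
  have e3 : (z^6*(u*(z^6*(v*(v*(u*(u*(u*(v*(v*1)))))))))) = (z^6*(z^6*(u*(v*(v*(u*(u*(u*(v*(v*1)))))))))) := congrArg (fun y => (z^6*y)) (z6pull_u (v*(v*(u*(u*(u*(v*(v*1))))))))
  have e4 : (z^6*(z^6*(u*(v*(v*(u*(u*(u*(v*(v*1)))))))))) = (z^6*(z^6*(z^6*(v*(v*(u*(u*(v*(v*1))))))))) := congrArg (fun y => (z^6*(z^6*y))) (hEg (u*(u*(v*(v*1)))))
  have e5 : (z^6*(z^6*(z^6*(v*(v*(u*(u*(v*(v*1))))))))) = (z^6*(z^6*(z^6*(v*(z^6*(u*(u*(v*1)))))))) := congrArg (fun y => (z^6*(z^6*(z^6*(v*y))))) (hDg (v*1))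
  have e6 : (z^6*(z^6*(z^6*(v*(z^6*(u*(u*(v*1)))))))) = (z^6*(z^6*(z^6*(z^6*(v*(u*(u*(v*1)))))))) := congrArg (fun y => (z^6*(z^6*(z^6*y)))) (z6pull_v (u*(u*(v*1))))
  have e7 : (z^6*(z^6*(z^6*(z^6*(v*(u*(u*(v*1)))))))) = (z^6*(z^6*(z^6*(z^6*(z^6*(u*(u*1))))))) := congrArg (fun y => (z^6*(z^6*(z^6*(z^6*y))))) (hDg 1)
  exact (((((((e0).trans e1).trans e2).trans e3).trans e4).trans e5).trans e6).trans e7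

lemma J1core : (v*(u*1)) = (u*(u*(u*(u*(v*(u*1)))))) := by
  have e0 : (v*(u*1)) = (u*(u*(u*(u*(v*(u*1)))))) := congrArg (fun y => y) (hured (v*(u*1))).symm
  exact e0

lemma J2core : (v*(v*(u*1))) = (z^6*(u*(u*(u*(v*(v*1)))))) := by
  have e0 : (v*(v*(u*1))) = (u*(u*(u*(u*(v*(v*(u*1))))))) := congrArg (fun y => y) (hured (v*(v*(u*1)))).symm
  have e1 : (u*(u*(u*(u*(v*(v*(u*1))))))) = (u*(u*(u*(z^6*(v*(v*1)))))) := congrArg (fun y => (u*(u*(u*y)))) (hEg 1)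
  have e2 : (u*(u*(u*(z^6*(v*(v*1)))))) = (u*(u*(z^6*(u*(v*(v*1)))))) := congrArg (fun y => (u*(u*y))) (z6pull_u (v*(v*1)))
  have e3 : (u*(u*(z^6*(u*(v*(v*1)))))) = (u*(z^6*(u*(u*(v*(v*1)))))) := congrArg (fun y => (u*y)) (z6pull_u (u*(v*(v*1))))
  have e4 : (u*(z^6*(u*(u*(v*(v*1)))))) = (z^6*(u*(u*(u*(v*(v*1)))))) := congrArg (fun y => y) (z6pull_u (u*(u*(v*(v*1)))))
  exact ((((e0).trans e1).trans e2).trans e3).trans e4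

lemma J3core : (v*(v*(v*1))) = (z^6*(z^6*(z^6*(u*(u*(v*(u*(u*1)))))))) := by
  have e0 : (v*(v*(v*1))) = (u*(u*(u*(u*(v*(v*(v*1))))))) := congrArg (fun y => y) (hured (v*(v*(v*1)))).symm
  have e1 : (u*(u*(u*(u*(v*(v*(v*1))))))) = (u*(u*(u*(u*(v*(v*(u*(u*(u*(u*(v*1))))))))))) := congrArg (fun y => (u*(u*(u*(u*(v*(v*y))))))) (hured (v*1)).symm
  have e2 : (u*(u*(u*(u*(v*(v*(u*(u*(u*(u*(v*1))))))))))) = (u*(u*(u*(z^6*(v*(v*(u*(u*(u*(v*1)))))))))) := congrArg (fun y => (u*(u*(u*y)))) (hEg (u*(u*(u*(v*1)))))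
  have e3 : (u*(u*(u*(z^6*(v*(v*(u*(u*(u*(v*1)))))))))) = (u*(u*(z^6*(u*(v*(v*(u*(u*(u*(v*1)))))))))) := congrArg (fun y => (u*(u*y))) (z6pull_u (v*(v*(u*(u*(u*(v*1)))))))
  have e4 : (u*(u*(z^6*(u*(v*(v*(u*(u*(u*(v*1)))))))))) = (u*(z^6*(u*(u*(v*(v*(u*(u*(u*(v*1)))))))))) := congrArg (fun y => (u*y)) (z6pull_u (u*(v*(v*(u*(u*(u*(v*1))))))))
  have e5 : (u*(z^6*(u*(u*(v*(v*(u*(u*(u*(v*1)))))))))) = (z^6*(u*(u*(u*(v*(v*(u*(u*(u*(v*1)))))))))) := congrArg (fun y => y) (z6pull_u (u*(u*(v*(v*(u*(u*(u*(v*1)))))))))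
  have e6 : (z^6*(u*(u*(u*(v*(v*(u*(u*(u*(v*1)))))))))) = (z^6*(u*(u*(z^6*(v*(v*(u*(u*(v*1))))))))) := congrArg (fun y => (z^6*(u*(u*y)))) (hEg (u*(u*(v*1))))
  have e7 : (z^6*(u*(u*(z^6*(v*(v*(u*(u*(v*1))))))))) = (z^6*(u*(z^6*(u*(v*(v*(u*(u*(v*1))))))))) := congrArg (fun y => (z^6*(u*y))) (z6pull_u (v*(v*(u*(u*(v*1))))))
  have e8 : (z^6*(u*(z^6*(u*(v*(v*(u*(u*(v*1))))))))) = (z^6*(z^6*(u*(u*(v*(v*(u*(u*(v*1))))))))) := congrArg (fun y => (z^6*y)) (z6pull_u (u*(v*(v*(u*(u*(v*1)))))))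
  have e9 : (z^6*(z^6*(u*(u*(v*(v*(u*(u*(v*1))))))))) = (z^6*(z^6*(u*(u*(v*(z^6*(u*(u*1)))))))) := congrArg (fun y => (z^6*(z^6*(u*(u*(v*y)))))) (hDg 1)
  have e10 : (z^6*(z^6*(u*(u*(v*(z^6*(u*(u*1)))))))) = (z^6*(z^6*(u*(u*(z^6*(v*(u*(u*1)))))))) := congrArg (fun y => (z^6*(z^6*(u*(u*y))))) (z6pull_v (u*(u*1)))
  have e11 : (z^6*(z^6*(u*(u*(z^6*(v*(u*(u*1)))))))) = (z^6*(z^6*(u*(z^6*(u*(v*(u*(u*1)))))))) := congrArg (fun y => (z^6*(z^6*(u*y)))) (z6pull_u (v*(u*(u*1))))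
  have e12 : (z^6*(z^6*(u*(z^6*(u*(v*(u*(u*1)))))))) = (z^6*(z^6*(z^6*(u*(u*(v*(u*(u*1)))))))) := congrArg (fun y => (z^6*(z^6*y))) (z6pull_u (u*(v*(u*(u*1)))))
  exact ((((((((((((e0).trans e1).trans e2).trans e3).trans e4).trans e5).trans e6).trans e7).trans e8).trans e9).trans e10).trans e11).trans e12

lemma J5core : (u*(v*(u*(u*(v*1))))) = (z^6*(u*(u*(u*1)))) := by
  have e0 : (u*(v*(u*(u*(v*1))))) = (u*(z^6*(u*(u*1)))) := congrArg (fun y => (u*y)) (hDg 1)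
  have e1 : (u*(z^6*(u*(u*1)))) = (z^6*(u*(u*(u*1)))) := congrArg (fun y => y) (z6pull_u (u*(u*1)))
  exact (e0).trans e1

lemma J6core : (u*(v*(u*(u*(u*(v*1)))))) = (z^6*(u*(u*(u*(u*(v*(u*(u*(u*1))))))))) := by
  have e0 : (u*(v*(u*(u*(u*(v*1)))))) = (v*(u*(v*(u*(u*(v*1)))))) := congrArg (fun y => y) (RBg (u*(u*(v*1))))
  have e1 : (v*(u*(v*(u*(u*(v*1)))))) = (v*(u*(z^6*(u*(u*1))))) := congrArg (fun y => (v*(u*y))) (hDg 1)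
  have e2 : (v*(u*(z^6*(u*(u*1))))) = (v*(z^6*(u*(u*(u*1))))) := congrArg (fun y => (v*y)) (z6pull_u (u*(u*1)))
  have e3 : (v*(z^6*(u*(u*(u*1))))) = (z^6*(v*(u*(u*(u*1))))) := congrArg (fun y => y) (z6pull_v (u*(u*(u*1))))
  have e4 : (z^6*(v*(u*(u*(u*1))))) = (z^6*(u*(u*(u*(u*(v*(u*(u*(u*1))))))))) := congrArg (fun y => (z^6*y)) (hured (v*(u*(u*(u*1))))).symm
  exact ((((e0).trans e1).trans e2).trans e3).trans e4

lemma hz24 : z^6*(z^6*(z^6*z^6)) = 1 := by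
  have E := hz24core
  have E2 : (1:G11)*(z^6*(u*(u*1))) = (z^6*(z^6*(z^6*z^6)))*(z^6*(u*(u*1))) := by
    conv_lhs => rw [one_mul, E]
    simp only [mul_assoc]
  exact (mul_right_cancel E2).symm

lemma hz24' : z^24 = 1 := by
  have h : z^6*(z^6*(z^6*z^6)) = z^(24:ℕ) := by
    rw [← pow_add, ← pow_add, ← pow_add]
  exact h.symm.trans hz24
-- chunk 5: sets and closure
def Aset : Set G11 := {1, z ^ 6, z ^ 12, z ^ 18}
def Bset : Set G11 := {1, u, u ^ 2, u ^ 3}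
def Cset : Set G11 := {1, v, v ^ 2, w, w * u, w * u ^ 2}
def fprod : G11 × G11 × G11 → G11 := fun p => p.1 * p.2.1 * p.2.2
def Dset : Set (G11 × G11 × G11) := Aset ×ˢ (Bset ×ˢ Cset)
def K : Set G11 := fprod '' Dset

lemma pz0 : z^(6*0) = (1:G11) := by norm_num
lemma pz1 : z^(6*1) = z^6 := by norm_num
lemma pz3 : z^(6*3) = z^6*(z^6*z^6) := by
  rw [← pow_add, ← pow_add]

lemma Ku1 : (1:G11)*u = z^(6*0)*(u^1*1) := by
  rw [pz0, pow_one, one_mul, one_mul, mul_one]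
lemma Kv1 : v*u = z^(6*0)*(u^3*w) := by
  have c := J1core; simp only [mul_one] at c
  rw [pz0, one_mul, p3, hw_uvu]; simp only [mul_assoc]; exact c
lemma Kv2 : v^2*u = z^(6*1)*(u^3*v^2) := by
  have c := J2core; simp only [mul_one] at c
  rw [pz1, p3, p2]; simp only [mul_assoc]; exact c
lemma Kw : w*u = z^(6*0)*(u^0*(w*u)) := by
  rw [pz0, pow_zero, one_mul, one_mul]
lemma Kwu : (w*u)*u = z^(6*0)*(u^0*(w*u^2)) := by
  rw [pz0, pow_zero, one_mul, one_mul, p2, mul_assoc]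
lemma Kwu2 : (w*u^2)*u = z^(6*0)*(u^1*v) := by
  rw [pz0, one_mul, pow_one, p2, hw_uvu]
  have h1 : ((u*v*u)*(u*u))*u = u*(v*(u*(u*(u*u)))) := by simp only [mul_assoc]
  rw [h1, hu4, mul_one]
lemma Lo1 : (1:G11)*v = z^(6*0)*(u^0*v) := by
  simp
lemma Lv : v*v = z^(6*0)*(u^0*v^2) := by
  rw [pz0, pow_zero, one_mul, one_mul, p2]
lemma Lv2 : v^2*v = z^(6*3)*(u^1*(w*u)) := by
  have c := J3core; simp only [mul_one] at c
  rw [pz3, pow_one, p2, hw_uvu]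
  simp only [mul_assoc]; exact c
lemma Lw : w*v = z^(6*0)*(u^1*w) := by
  rw [pz0, one_mul, pow_one]; exact hwv
lemma Lwu : (w*u)*v = z^(6*1)*(u^3*1) := by
  have c := J5core; simp only [mul_one] at c
  rw [pz1, p3, mul_one, hw_uvu]; simp only [mul_assoc]; exact c
lemma Lwu2 : (w*u^2)*v = z^(6*1)*(u^3*(w*u^2)) := by
  have c := J6core; simp only [mul_one] at c
  rw [pz1, p3, p2, hw_uvu]; simp only [mul_assoc]; exact c

lemma hAmem (c : ℕ) : z^(6*c) ∈ Aset := by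
  have h : z^(6*c) = z^(6*(c % 4)) := by
    conv_lhs => rw [← Nat.div_add_mod c 4]
    rw [Nat.mul_add, show 6*(4*(c/4)) = 24*(c/4) by ring, pow_add, pow_mul, hz24',
      one_pow, one_mul]
  rw [h]
  have h4 : c % 4 < 4 := Nat.mod_lt _ (by norm_num)
  interval_cases h5 : c % 4 <;> simp [Aset]

lemma hBmem (a : ℕ) : u^a ∈ Bset := by
  have h : u^a = u^(a % 4) := by
    conv_lhs => rw [← Nat.div_add_mod a 4]
    rw [pow_add, pow_mul, hu4', one_pow, one_mul]
  rw [h]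
  have h4 : a % 4 < 4 := Nat.mod_lt _ (by norm_num)
  interval_cases h5 : a % 4 <;> simp [Bset]

lemma memK (c a : ℕ) {x : G11} (hx : x ∈ Cset) : z^(6*c)*(u^a*x) ∈ K :=
  ⟨(z^(6*c), u^a, x), ⟨hAmem c, hBmem a, hx⟩, by simp [fprod, mul_assoc]⟩

lemma step_aux {x g q : G11} (c' a' : ℕ) (hxg : x*g = z^(6*c')*(u^(a')*q))
    (hq : q ∈ Cset) (c a : ℕ) : (z^(6*c)*(u^a*x))*g ∈ K := by
  have hcom : u^a * z^(6*c') = z^(6*c') * u^a := (((zc u).pow_left (6*c')).pow_right a).eq.symm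
  have key : (z^(6*c)*(u^a*x))*g = z^(6*(c+c'))*(u^(a+a')*q) := by
    have h1 : (z^(6*c)*(u^a*x))*g = z^(6*c)*(u^a*(x*g)) := by simp only [mul_assoc]
    rw [h1, hxg, show u^a*(z^(6*c')*(u^(a')*q)) = (u^a*z^(6*c'))*(u^(a')*q) from
      (mul_assoc _ _ _).symm, hcom]
    have h2 : z^(6*c)*((z^(6*c')*u^a)*(u^(a')*q)) = (z^(6*c)*z^(6*c'))*((u^a*u^(a'))*q) := by
      simp only [mul_assoc]
    rw [h2, ← pow_add, ← pow_add, show 6*c+6*c' = 6*(c+c') by ring]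
  rw [key]
  exact memK _ _ hq

lemma Kstep_u : ∀ k ∈ K, k*u ∈ K := by
  rintro k ⟨⟨a, b, x⟩, ⟨ha, hb, hx⟩, rfl⟩
  obtain ⟨c, rfl⟩ : ∃ c:ℕ, a = z^(6*c) := by
    rcases ha with rfl|rfl|rfl|rfl
    exacts [⟨0, by norm_num⟩, ⟨1, by norm_num⟩, ⟨2, by norm_num⟩, ⟨3, by norm_num⟩]
  obtain ⟨i, rfl⟩ : ∃ i:ℕ, b = u^i := by
    rcases hb with rfl|rfl|rfl|rfl
    exacts [⟨0, (pow_zero u).symm⟩, ⟨1, (pow_one u).symm⟩, ⟨2, rfl⟩, ⟨3, rfl⟩]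
  have hshape : fprod (z^(6*c), u^i, x) * u = (z^(6*c)*(u^i*x))*u := by
    simp only [fprod, mul_assoc]
  rw [hshape]
  rcases hx with rfl|rfl|rfl|rfl|rfl|rfl
  · exact step_aux 0 1 Ku1 (by simp [Cset]) c i
  · exact step_aux 0 3 Kv1 (by simp [Cset]) c i
  · exact step_aux 1 3 Kv2 (by simp [Cset]) c i
  · exact step_aux 0 0 Kw (by simp [Cset]) c i
  · exact step_aux 0 0 Kwu (by simp [Cset]) c i
  · exact step_aux 0 1 Kwu2 (by simp [Cset]) c i

lemma Kstep_v : ∀ k ∈ K, k*v ∈ K := by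
  rintro k ⟨⟨a, b, x⟩, ⟨ha, hb, hx⟩, rfl⟩
  obtain ⟨c, rfl⟩ : ∃ c:ℕ, a = z^(6*c) := by
    rcases ha with rfl|rfl|rfl|rfl
    exacts [⟨0, by norm_num⟩, ⟨1, by norm_num⟩, ⟨2, by norm_num⟩, ⟨3, by norm_num⟩]
  obtain ⟨i, rfl⟩ : ∃ i:ℕ, b = u^i := by
    rcases hb with rfl|rfl|rfl|rfl
    exacts [⟨0, (pow_zero u).symm⟩, ⟨1, (pow_one u).symm⟩, ⟨2, rfl⟩, ⟨3, rfl⟩]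
  have hshape : fprod (z^(6*c), u^i, x) * v = (z^(6*c)*(u^i*x))*v := by
    simp only [fprod, mul_assoc]
  rw [hshape]
  rcases hx with rfl|rfl|rfl|rfl|rfl|rfl
  · exact step_aux 0 0 Lo1 (by simp [Cset]) c i
  · exact step_aux 0 0 Lv (by simp [Cset]) c i
  · exact step_aux 3 1 Lv2 (by simp [Cset]) c i
  · exact step_aux 0 1 Lw (by simp [Cset]) c i
  · exact step_aux 1 3 Lwu (by simp [Cset]) c i
  · exact step_aux 1 3 Lwu2 (by simp [Cset]) c i

lemma hKone : (1:G11) ∈ K := by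
  have h := memK 0 0 (show (1:G11) ∈ Cset by simp [Cset])
  simpa using h

lemma G8_subset_K : (G8 : Set G11) ⊆ K := by
  intro g hg
  have hg' : g ∈ Submonoid.closure (({u, v} : Set G11) ∪ ({u, v} : Set G11)⁻¹) := by
    rw [← Subgroup.closure_toSubmonoid]; exact hg
  clear hg
  have main : ∀ k ∈ K, k*g ∈ K := by
    induction hg' using Submonoid.closure_induction with
    | mem y hy =>
        have hu3 : ∀ k ∈ K, k*(u*(u*u)) ∈ K := by
          intro k hk
          rw [show k*(u*(u*u)) = ((k*u)*u)*u by simp only [mul_assoc]]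
          exact Kstep_u _ (Kstep_u _ (Kstep_u _ hk))
        have hv3 : ∀ k ∈ K, k*(v*(v*v)) ∈ K := by
          intro k hk
          rw [show k*(v*(v*v)) = ((k*v)*v)*v by simp only [mul_assoc]]
          exact Kstep_v _ (Kstep_v _ (Kstep_v _ hk))
        rcases hy with (rfl|rfl) | hy
        · exact Kstep_u
        · exact Kstep_v
        · rw [Set.mem_inv] at hy
          rcases hy with h | h
          · have hyu : y = u*(u*u) := by
              rw [show y = y⁻¹⁻¹ by rw [inv_inv], h]
              exact inv_eq_of_mul_eq_one_right hu4
            rw [hyu]; exact hu3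
          · have hyv : y = v*(v*v) := by
              rw [show y = y⁻¹⁻¹ by rw [inv_inv], h]
              exact inv_eq_of_mul_eq_one_right hv4
            rw [hyv]; exact hv3
    | one => intro k hk; simpa using hk
    | mul a b ha hb iha ihb =>
        intro k hk
        rw [← mul_assoc]
        exact ihb (k*a) (iha k hk)
  have h1 := main 1 hKone
  simpa using h1
-- chunk 6: matrix model
abbrev M : Type := Matrix (Fin 2) (Fin 2) (ZMod 73)

def Sm : Mˣ := ⟨!![0,1;1,0], !![0,1;1,0], by decide, by decide⟩
def Tm : Mˣ := ⟨!![72,43;53,66], !![17,21;14,65], by decide, by decide⟩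
def Um : Mˣ := ⟨!![1,46;17,25], !![18,72;52,27], by decide, by decide⟩

def fgen : Fin 3 → Mˣ := ![Sm, Tm, Um]

lemma hrels : ∀ r ∈ rels, FreeGroup.lift fgen r = 1 := by
  intro r hr
  rcases hr with rfl | rfl | rfl | rfl | rfl <;>
    · simp only [map_mul, map_pow, map_inv, FreeGroup.lift_apply_of]
      decide

def φ : G11 →* Mˣ := PresentedGroup.toGroup hrels
def ψ : G11 →* M := (Units.coeHom M).comp φ

lemma hψs : ψ s = !![0,1;1,0] := by
  simp [ψ, φ, s, PresentedGroup.toGroup.of, fgen, Sm]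
lemma hψt : ψ t = !![72,43;53,66] := by
  simp [ψ, φ, t, PresentedGroup.toGroup.of, fgen, Tm]
lemma hψu : ψ u = !![1,46;17,25] := by
  simp [ψ, φ, u, PresentedGroup.toGroup.of, fgen, Um]
lemma hψz : ψ z = !![7,0;0,7] := by
  rw [show z = s*t*u from rfl, map_mul, map_mul, hψs, hψt, hψu]; decide
lemma hψv : ψ v = !![25,17;46,1] := by
  rw [show v = s*u*s from rfl, map_mul, map_mul, hψs, hψu]; decide
lemma hψw : ψ w = !![0,51;51,0] := by
  rw [show w = z^3*s from rfl, map_mul, map_pow, hψz, hψs]; decide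

def Am : List M := [!![1,0;0,1], !![46,0;0,46], !![72,0;0,72], !![27,0;0,27]]
def Bm : List M := [!![1,0;0,1], !![1,46;17,25], !![53,28;4,20], !![18,72;52,27]]
def Cm : List M := [!![1,0;0,1], !![25,17;46,1], !![20,4;28,53], !![0,51;51,0], !![64,34;51,10], !![58,71;2,41]]
def TL : List (M × M × M) := Am ×ˢ (Bm ×ˢ Cm)

lemma hPLnd : (TL.map (fun p => p.1 * p.2.1 * p.2.2)).Nodup := by decide

lemma memAm : ∀ {g : G11}, g ∈ Aset → ψ g ∈ Am := by
  rintro g (rfl|rfl|rfl|rfl) <;>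
    · simp only [map_one, map_pow, hψz]
      decide
lemma memBm : ∀ {g : G11}, g ∈ Bset → ψ g ∈ Bm := by
  rintro g (rfl|rfl|rfl|rfl) <;>
    · simp only [map_one, map_pow, hψu]
      decide
lemma memCm : ∀ {g : G11}, g ∈ Cset → ψ g ∈ Cm := by
  rintro g (rfl|rfl|rfl|rfl|rfl|rfl) <;>
    · simp only [map_one, map_pow, map_mul, hψv, hψw, hψu]
      decide

lemma injA : ∀ {a : G11}, a ∈ Aset → ∀ {b : G11}, b ∈ Aset → ψ a = ψ b → a = b := by
  rintro a (rfl|rfl|rfl|rfl) b (rfl|rfl|rfl|rfl) h <;>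
    first
      | rfl
      | (exfalso
         simp only [map_one, map_pow, map_mul, hψz, hψu, hψv, hψw] at h
         exact absurd h (by decide))
lemma injB : ∀ {a : G11}, a ∈ Bset → ∀ {b : G11}, b ∈ Bset → ψ a = ψ b → a = b := by
  rintro a (rfl|rfl|rfl|rfl) b (rfl|rfl|rfl|rfl) h <;>
    first
      | rfl
      | (exfalso
         simp only [map_one, map_pow, map_mul, hψz, hψu, hψv, hψw] at h
         exact absurd h (by decide))
lemma injC : ∀ {a : G11}, a ∈ Cset → ∀ {b : G11}, b ∈ Cset → ψ a = ψ b → a = b := by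
  rintro a (rfl|rfl|rfl|rfl|rfl|rfl) b (rfl|rfl|rfl|rfl|rfl|rfl) h <;>
    first
      | rfl
      | (exfalso
         simp only [map_one, map_pow, map_mul, hψz, hψu, hψv, hψw] at h
         exact absurd h (by decide))

lemma nodup_map_inj {α β : Type*} {f : α → β} {l : List α} (h : (l.map f).Nodup) :
    ∀ {a}, a ∈ l → ∀ {b}, b ∈ l → f a = f b → a = b := by
  induction l with
  | nil => intro a ha; exact absurd ha List.not_mem_nil
  | cons hd tl ih =>
      rw [List.map_cons, List.nodup_cons] at h
      intro a ha b hb hf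
      rcases List.mem_cons.mp ha with rfl | ha' <;> rcases List.mem_cons.mp hb with rfl | hb'
      · rfl
      · exact absurd (List.mem_map.mpr ⟨b, hb', hf.symm⟩) h.1
      · exact absurd (List.mem_map.mpr ⟨a, ha', hf⟩) h.1
      · exact ih h.2 ha' hb' hf

lemma injOn : Set.InjOn fprod Dset := by
  rintro ⟨a1, b1, x1⟩ ⟨ha1, hb1, hx1⟩ ⟨a2, b2, x2⟩ ⟨ha2, hb2, hx2⟩ hf
  have hm1 : (ψ a1, ψ b1, ψ x1) ∈ TL :=
    List.pair_mem_product.mpr ⟨memAm ha1, List.pair_mem_product.mpr ⟨memBm hb1, memCm hx1⟩⟩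
  have hm2 : (ψ a2, ψ b2, ψ x2) ∈ TL :=
    List.pair_mem_product.mpr ⟨memAm ha2, List.pair_mem_product.mpr ⟨memBm hb2, memCm hx2⟩⟩
  have heq : (fun p : M × M × M => p.1 * p.2.1 * p.2.2) (ψ a1, ψ b1, ψ x1)
      = (fun p : M × M × M => p.1 * p.2.1 * p.2.2) (ψ a2, ψ b2, ψ x2) := by
    have h := congrArg ψ hf
    simpa [fprod, map_mul] using h
  have h3 := nodup_map_inj hPLnd hm1 hm2 heq
  obtain ⟨e1, e2, e3⟩ : ψ a1 = ψ a2 ∧ ψ b1 = ψ b2 ∧ ψ x1 = ψ x2 := by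
    simpa [Prod.ext_iff] using h3
  exact Prod.ext (injA ha1 ha2 e1) (Prod.ext (injB hb1 hb2 e2) (injC hx1 hx2 e3))
-- chunk 7: membership, center, final
lemma huG8 : u ∈ G8 := Subgroup.subset_closure (by simp)
lemma hvG8 : v ∈ G8 := Subgroup.subset_closure (by simp)
lemma hwG8 : w ∈ G8 := by rw [hw_uvu]; exact mul_mem (mul_mem huG8 hvG8) huG8
lemma hz6G8 : z^6 ∈ G8 := by rw [← hww]; exact mul_mem hwG8 hwG8

lemma AsubG8 : ∀ {g : G11}, g ∈ Aset → g ∈ G8 := by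
  rintro g (rfl|rfl|rfl|rfl)
  · exact one_mem _
  · exact hz6G8
  · rw [show z^12 = z^6*z^6 by rw [← pow_add]]; exact mul_mem hz6G8 hz6G8
  · rw [show z^18 = z^6*(z^6*z^6) by rw [← pow_add, ← pow_add]]
    exact mul_mem hz6G8 (mul_mem hz6G8 hz6G8)
lemma BsubG8 : ∀ {g : G11}, g ∈ Bset → g ∈ G8 := by
  rintro g (rfl|rfl|rfl|rfl)
  · exact one_mem _
  · exact huG8
  · exact pow_mem huG8 2
  · exact pow_mem huG8 3
lemma CsubG8 : ∀ {g : G11}, g ∈ Cset → g ∈ G8 := by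
  rintro g (rfl|rfl|rfl|rfl|rfl|rfl)
  · exact one_mem _
  · exact hvG8
  · exact pow_mem hvG8 2
  · exact hwG8
  · exact mul_mem hwG8 huG8
  · exact mul_mem hwG8 (pow_mem huG8 2)

lemma mapsTo : Set.MapsTo fprod Dset (G8 : Set G11) := by
  rintro ⟨a, b, x⟩ ⟨ha, hb, hx⟩
  exact mul_mem (mul_mem (AsubG8 ha) (BsubG8 hb)) (CsubG8 hx)

lemma surjOn : Set.SurjOn fprod Dset (G8 : Set G11) := G8_subset_K

lemma hz6center : z^6 ∈ Subgroup.center G11 := Subgroup.pow_mem _ z_mem_center 6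
lemma hw2G8 : w^2 ∈ G8 := by rw [p2]; exact mul_mem hwG8 hwG8
lemma hw2z6 : w^2 = z^6 := by rw [p2]; exact hww

lemma central_cancel {n : ℕ} {m y : G11} (h : (z^n*m)*y = y*(z^n*m)) : m*y = y*m := by
  have h2 : z^n*(m*y) = z^n*(y*m) :=
    calc z^n*(m*y) = (z^n*m)*y := (mul_assoc _ _ _).symm
    _ = y*(z^n*m) := h
    _ = (y*z^n)*m := (mul_assoc _ _ _).symm
    _ = (z^n*y)*m := by rw [← ((zc y).pow_left n).eq]
    _ = z^n*(y*m) := mul_assoc _ _ _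
  exact mul_left_cancel h2

lemma part9 : (Subgroup.center ↥G8).map G8.subtype = Subgroup.zpowers (w ^ 2) := by
  apply le_antisymm
  · rintro gg ⟨g₀, hg₀c, rfl⟩
    have hcent := Subgroup.mem_center_iff.mp hg₀c
    show (↑g₀ : G11) ∈ Subgroup.zpowers (w ^ 2)
    have hK : (↑g₀ : G11) ∈ K := G8_subset_K g₀.2
    obtain ⟨⟨a, b, x⟩, ⟨ha, hb, hx⟩, heq⟩ := hK
    have hcu : ((↑g₀ : G11))*u = u*↑g₀ := by
      have h2 := Subtype.ext_iff.mp (hcent ⟨u, huG8⟩)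
      simp only [MulMemClass.coe_mul] at h2
      exact h2.symm
    have hcv : ((↑g₀ : G11))*v = v*↑g₀ := by
      have h2 := Subtype.ext_iff.mp (hcent ⟨v, hvG8⟩)
      simp only [MulMemClass.coe_mul] at h2
      exact h2.symm
    rw [← heq] at hcu hcv ⊢
    obtain ⟨c, rfl⟩ : ∃ c:ℕ, a = z^(6*c) := by
      rcases ha with rfl|rfl|rfl|rfl
      exacts [⟨0, by norm_num⟩, ⟨1, by norm_num⟩, ⟨2, by norm_num⟩, ⟨3, by norm_num⟩]
    have hre : fprod (z^(6*c), b, x) = z^(6*c)*(b*x) := by simp [fprod, mul_assoc]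
    rw [hre] at hcu hcv ⊢
    rcases hb with rfl|rfl|rfl|rfl <;> rcases hx with rfl|rfl|rfl|rfl|rfl|rfl <;>
      first
        | (rw [one_mul, mul_one]
           rw [show z^(6*c) = (w^2)^c by rw [hw2z6, ← pow_mul]]
           exact Subgroup.pow_mem _ (Subgroup.mem_zpowers _) c)
        | (exact absurd (congrArg ψ (central_cancel hcu))
            (by simp only [map_mul, map_pow, map_one, hψu, hψv, hψw]; decide))
        | (exact absurd (congrArg ψ (central_cancel hcv))
            (by simp only [map_mul, map_pow, map_one, hψu, hψv, hψw]; decide))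
  · rw [Subgroup.zpowers_le]
    refine ⟨⟨w^2, hw2G8⟩, Subgroup.mem_center_iff.mpr (fun h => Subtype.ext ?_), rfl⟩
    show (↑h : G11) * w^2 = w^2 * ↑h
    rw [hw2z6]
    exact ((z6c (↑h : G11)).eq).symm

lemma part10 : (Subgroup.center ↥G8).map G8.subtype = G8 ⊓ Subgroup.center G11 := by
  apply le_antisymm
  · rw [part9]
    apply le_inf
    · rw [Subgroup.zpowers_le]; exact hw2G8
    · rw [Subgroup.zpowers_le, hw2z6]; exact hz6center
  · intro g hg
    obtain ⟨hg1, hg2⟩ := Subgroup.mem_inf.mp hg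
    refine ⟨⟨g, hg1⟩, Subgroup.mem_center_iff.mpr (fun h => Subtype.ext ?_), rfl⟩
    show (↑h : G11) * g = g * ↑h
    exact Subgroup.mem_center_iff.mp hg2 ↑h

lemma part8 : orderOf (z^6) = 4 := by
  rw [orderOf_eq_iff (by norm_num)]
  refine ⟨by rw [← pow_mul, show 6*4 = 24 from rfl]; exact hz24', ?_⟩
  intro m hm hm0
  interval_cases m
  · intro h
    rw [pow_one] at h
    exact absurd (congrArg ψ h) (by simp only [map_pow, map_one, hψz]; decide)
  · intro h
    rw [← pow_mul] at h
    exact absurd (congrArg ψ h) (by simp only [map_pow, map_one, hψz]; decide)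
  · intro h
    rw [← pow_mul] at h
    exact absurd (congrArg ψ h) (by simp only [map_pow, map_one, hψz]; decide)


theorem statement13 :
    w = u * v * u ∧
    w = v * u * v ∧
    s⁻¹ * w * s = w ∧
    s⁻¹ * v * s = u ∧
    w ^ 2 = u * v * u * v * u * v ∧
    w ^ 2 = v * u * v * u * v * u ∧
    w ^ 2 = z ^ 6 ∧
    orderOf (z ^ 6) = 4 ∧
    (Subgroup.center ↥G8).map G8.subtype = Subgroup.zpowers (w ^ 2) ∧
    (Subgroup.center ↥G8).map G8.subtype = G8 ⊓ Subgroup.center G11 ∧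
    Set.BijOn (fun p : G11 × G11 × G11 => p.1 * p.2.1 * p.2.2)
      (({1, z ^ 6, z ^ 12, z ^ 18} : Set G11) ×ˢ (({1, u, u ^ 2, u ^ 3} : Set G11) ×ˢ ({1, v, v ^ 2, w, w * u, w * u ^ 2} : Set G11)))
      (G8 : Set G11) := by
  refine ⟨hw_uvu, hw_vuv, ?_, ?_, ?_, ?_, ?_, part8, part9, part10, ?_⟩
  · rw [hsinv, mul_assoc]; exact hw_sws
  · rw [hsinv, show v = s*u*s from rfl]
    simp only [mul_assoc, hsred, hss, mul_one]
  · rw [p2, show u*v*u*v*u*v = (u*v*u)*(v*u*v) by simp only [mul_assoc], ← hw_uvu, ← hw_vuv]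
  · rw [p2, show v*u*v*u*v*u = (v*u*v)*(u*v*u) by simp only [mul_assoc], ← hw_uvu, ← hw_vuv]
  · rw [p2]; exact hww
  · exact ⟨mapsTo, injOn, surjOn⟩

end Octa
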